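/- Let P be a finite stochastic matrix, r a reward vector, J = P_* r the gain, and V = (I - P + P_*)^{-1}(I - P_*) r the bias. Then the Bellman equations hold: P J = J and r + P V = J + V. -/

import Mathlib

open Matrix Filter Finset

/-- A row-stochastic matrix: nonnegative entries and rows summing to 1. -/
def IsStochastic {n : Type*} [Fintype n] (P : Matrix n n ℝ) : Prop :=
  (∀ i j, 0 ≤ P i j) ∧ ∀ i, ∑ j, P i j = 1

/-- `Pstar` is the Cesàro limit of the powers of `P`. -/
def CesaroLimit {n : Type*} [Fintype n] [DecidableEq n] (P Pstar : Matrix n n ℝ) : Prop :=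
  Filter.Tendsto (fun H : ℕ => (H : ℝ)⁻¹ • ∑ i ∈ Finset.range H, P ^ i)
    Filter.atTop (nhds Pstar)

lemma isStochastic_pow {n : Type*} [Fintype n] [DecidableEq n] {P : Matrix n n ℝ}
    (hP : IsStochastic P) (k : ℕ) : IsStochastic (P ^ k) := by
  induction k with
  | zero =>
    constructor
    · intro i j
      simp only [pow_zero, Matrix.one_apply]
      split <;> norm_num
    · intro i
      simp [pow_zero, Matrix.one_apply]
  | succ k ih =>
    rw [pow_succ]
    constructor
    · intro i j
      rw [Matrix.mul_apply]
      exact Finset.sum_nonneg fun l _ => mul_nonneg (ih.1 i l) (hP.1 l j)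
    · intro i
      simp only [Matrix.mul_apply]
      rw [Finset.sum_comm]
      have : ∀ l, ∑ j, (P ^ k) i l * P l j = (P ^ k) i l := by
        intro l
        rw [← Finset.mul_sum, hP.2 l, mul_one]
      simp_rw [this]
      exact ih.2 i

lemma pow_entry_le_one {n : Type*} [Fintype n] [DecidableEq n] {P : Matrix n n ℝ}
    (hP : IsStochastic P) (k : ℕ) (i j : n) : (P ^ k) i j ≤ 1 := by
  have h := isStochastic_pow hP k
  calc (P ^ k) i j ≤ ∑ l, (P ^ k) i l :=
        Finset.single_le_sum (fun l _ => h.1 i l) (Finset.mem_univ j)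
    _ = 1 := h.2 i

lemma sum_mulVec' {n : Type*} [Fintype n] (s : Finset ℕ) (A : ℕ → Matrix n n ℝ) (x : n → ℝ) :
    (∑ i ∈ s, A i) *ᵥ x = ∑ i ∈ s, A i *ᵥ x := by
  induction s using Finset.induction with
  | empty => ext j; simp [Matrix.mulVec, dotProduct]
  | @insert _ _ h ih =>
    rw [Finset.sum_insert h, Finset.sum_insert h, Matrix.add_mulVec, ih]

theorem bellman_equations {n : Type*} [Fintype n] [DecidableEq n]
    (P Pstar : Matrix n n ℝ) (hP : IsStochastic P) (hC : CesaroLimit P Pstar)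
    (r J V : n → ℝ)
    (hJ : J = Pstar *ᵥ r)
    (hV : V = (1 - P + Pstar)⁻¹ *ᵥ ((1 - Pstar) *ᵥ r)) :
    P *ᵥ J = J ∧ r + P *ᵥ V = J + V := by
  set S : ℕ → Matrix n n ℝ := fun H => (H : ℝ)⁻¹ • ∑ i ∈ Finset.range H, P ^ i with hS
  -- the error term tends to zero
  have herr : Tendsto (fun H : ℕ => (H : ℝ)⁻¹ • (P ^ H - 1)) atTop (nhds 0) := by
    refine tendsto_pi_nhds.mpr ?_
    intro i
    rw [tendsto_pi_nhds]
    intro j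
    simp only [Matrix.smul_apply, Matrix.sub_apply, Pi.zero_apply]
    have hg : Tendsto (fun H : ℕ => (H : ℝ)⁻¹ * 2) atTop (nhds 0) := by
      simpa using tendsto_inv_atTop_nhds_zero_nat.mul_const (2:ℝ)
    refine squeeze_zero_norm (fun H => ?_) hg
    · 
      rw [smul_eq_mul, norm_mul]
      have h1 : ‖(P ^ H) i j - (1 : Matrix n n ℝ) i j‖ ≤ 2 := by
        rw [Real.norm_eq_abs, abs_sub_le_iff]
        have h0 := (isStochastic_pow hP H).1 i j
        have h1' := pow_entry_le_one hP H i j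
        have : (0:ℝ) ≤ (1 : Matrix n n ℝ) i j ∧ (1 : Matrix n n ℝ) i j ≤ 1 := by
          simp only [Matrix.one_apply]; split <;> norm_num
        constructor <;> linarith [this.1, this.2]
      calc ‖(H : ℝ)⁻¹‖ * ‖(P ^ H) i j - (1 : Matrix n n ℝ) i j‖
          ≤ ‖(H : ℝ)⁻¹‖ * 2 := by
            exact mul_le_mul_of_nonneg_left h1 (norm_nonneg _)
        _ = (H : ℝ)⁻¹ * 2 := by
            rw [Real.norm_eq_abs, abs_of_nonneg (by positivity)]
  -- telescoping identities
  have htele : ∀ H : ℕ, (∑ i ∈ Finset.range H, P ^ i) * P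
      = (∑ i ∈ Finset.range H, P ^ i) + (P ^ H - 1) := by
    intro H
    rw [Finset.sum_mul]
    have : ∀ i, P ^ i * P = P ^ (i + 1) := fun i => (pow_succ P i).symm
    simp_rw [this]
    have := Finset.sum_range_succ' (fun i => P ^ i) H
    rw [Finset.sum_range_succ (fun i => P ^ i) H] at this
    rw [pow_zero] at this
    have hB := eq_sub_of_add_eq this.symm
    rw [hB, add_sub_assoc]
  have htele' : ∀ H : ℕ, P * (∑ i ∈ Finset.range H, P ^ i)
      = (∑ i ∈ Finset.range H, P ^ i) + (P ^ H - 1) := by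
    intro H
    rw [Finset.mul_sum]
    have : ∀ i, P * P ^ i = P ^ (i + 1) := fun i => (pow_succ' P i).symm
    simp_rw [this]
    have := Finset.sum_range_succ' (fun i => P ^ i) H
    rw [Finset.sum_range_succ (fun i => P ^ i) H] at this
    rw [pow_zero] at this
    have hB := eq_sub_of_add_eq this.symm
    rw [hB, add_sub_assoc]
  -- S H * P = S H + err H and P * S H = S H + err H
  have hSP : ∀ H : ℕ, S H * P = S H + (H : ℝ)⁻¹ • (P ^ H - 1) := by
    intro H
    rw [hS]
    simp only [Matrix.smul_mul, htele, smul_add]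
  have hPS : ∀ H : ℕ, P * S H = S H + (H : ℝ)⁻¹ • (P ^ H - 1) := by
    intro H
    rw [hS]
    simp only [Matrix.mul_smul, htele', smul_add]
  -- limits
  have hlim1 : Tendsto (fun H => S H * P) atTop (nhds Pstar) := by
    have : Tendsto (fun H => S H + (H : ℝ)⁻¹ • (P ^ H - 1)) atTop (nhds (Pstar + 0)) :=
      hC.add herr
    rw [add_zero] at this
    simpa only [hSP] using this
  have hlim2 : Tendsto (fun H => P * S H) atTop (nhds Pstar) := by
    have : Tendsto (fun H => S H + (H : ℝ)⁻¹ • (P ^ H - 1)) atTop (nhds (Pstar + 0)) :=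
      hC.add herr
    rw [add_zero] at this
    simpa only [hPS] using this
  have hcontR : Continuous fun M : Matrix n n ℝ => M * P :=
    continuous_id.matrix_mul continuous_const
  have hcontL : Continuous fun M : Matrix n n ℝ => P * M :=
    continuous_const.matrix_mul continuous_id
  have hPsP : Pstar * P = Pstar :=
    tendsto_nhds_unique ((hcontR.tendsto Pstar).comp hC) hlim1
  have hPPs : P * Pstar = Pstar :=
    tendsto_nhds_unique ((hcontL.tendsto Pstar).comp hC) hlim2
  -- Pstar * P ^ i = Pstar
  have hPspow : ∀ i : ℕ, Pstar * P ^ i = Pstar := by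
    intro i
    induction i with
    | zero => simp
    | succ i ih => rw [pow_succ, ← Matrix.mul_assoc, ih, hPsP]
  -- Pstar * Pstar = Pstar
  have hPsPs : Pstar * Pstar = Pstar := by
    have h1 : Tendsto (fun H => Pstar * S H) atTop (nhds (Pstar * Pstar)) :=
      ((continuous_const.matrix_mul continuous_id :
        Continuous fun M : Matrix n n ℝ => Pstar * M).tendsto Pstar).comp hC
    have h2 : ∀ᶠ H : ℕ in atTop, Pstar * S H = Pstar := by
      filter_upwards [eventually_ge_atTop 1] with H hH
      rw [hS]
      simp only [Matrix.mul_smul, Finset.mul_sum, hPspow, Finset.sum_const,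
        Finset.card_range]
      rw [← Nat.cast_smul_eq_nsmul ℝ, smul_smul, inv_mul_cancel₀
        (Nat.cast_ne_zero.mpr (Nat.one_le_iff_ne_zero.mp hH)), one_smul]
    have h3 : Tendsto (fun H => Pstar * S H) atTop (nhds Pstar) := by
      rw [tendsto_congr' h2]
      exact tendsto_const_nhds
    exact tendsto_nhds_unique h1 h3
  set A : Matrix n n ℝ := 1 - P + Pstar with hA
  have hPsA : Pstar * A = Pstar := by
    rw [hA, Matrix.mul_add, Matrix.mul_sub, Matrix.mul_one, hPsP, hPsPs]
    abel
  -- A is invertible: its kernel is trivial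
  have hker : ∀ x : n → ℝ, A *ᵥ x = 0 → x = 0 := by
    intro x hx
    have h1 : Pstar *ᵥ x = 0 := by
      have : Pstar *ᵥ (A *ᵥ x) = 0 := by rw [hx]; simp [Matrix.mulVec_zero]
      rwa [Matrix.mulVec_mulVec, hPsA] at this
    have h2 : P *ᵥ x = x := by
      have hx' : x - P *ᵥ x + Pstar *ᵥ x = 0 := by
        rw [← Matrix.one_mulVec (v := x)] at hx ⊢
        rw [hA] at hx
        rw [Matrix.add_mulVec, Matrix.sub_mulVec] at hx
        simpa using hx
      rw [h1, add_zero, sub_eq_zero] at hx'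
      exact hx'.symm
    have h3 : ∀ k : ℕ, (P ^ k) *ᵥ x = x := by
      intro k
      induction k with
      | zero => simp
      | succ k ih => rw [pow_succ', ← Matrix.mulVec_mulVec, ih, h2]
    have h4 : ∀ᶠ H : ℕ in atTop, S H *ᵥ x = x := by
      filter_upwards [eventually_ge_atTop 1] with H hH
      rw [hS]
      simp only [Matrix.smul_mulVec, sum_mulVec', h3, Finset.sum_const,
        Finset.card_range]
      rw [← Nat.cast_smul_eq_nsmul ℝ, smul_smul, inv_mul_cancel₀
        (by exact_mod_cast Nat.one_le_iff_ne_zero.mp hH), one_smul]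
    have hcontV : Continuous fun M : Matrix n n ℝ => M *ᵥ x :=
      continuous_id.matrix_mulVec continuous_const
    have h5 : Tendsto (fun H => S H *ᵥ x) atTop (nhds (Pstar *ᵥ x)) :=
      (hcontV.tendsto Pstar).comp hC
    have h6 : Tendsto (fun H => S H *ᵥ x) atTop (nhds x) := by
      rw [tendsto_congr' h4]
      exact tendsto_const_nhds
    have := tendsto_nhds_unique h5 h6
    rw [h1] at this
    exact this.symm
  have hinj : Function.Injective (A.mulVec) := by
    intro x y hxy
    have : A *ᵥ (x - y) = 0 := by
      rw [Matrix.mulVec_sub, hxy, sub_self]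
    have := hker _ this
    rwa [sub_eq_zero] at this
  have hU : IsUnit A := Matrix.mulVec_injective_iff_isUnit.mp hinj
  have hUdet : IsUnit A.det := (Matrix.isUnit_iff_isUnit_det A).mp hU
  have hAAinv : A * A⁻¹ = 1 := Matrix.mul_nonsing_inv A hUdet
  -- key computations
  have hAV : A *ᵥ V = (1 - Pstar) *ᵥ r := by
    rw [hV, Matrix.mulVec_mulVec, hAAinv, Matrix.one_mulVec]
  have hPsAinv : Pstar * A⁻¹ = Pstar := by
    have : Pstar * A * A⁻¹ = Pstar := by
      rw [Matrix.mul_assoc, hAAinv, Matrix.mul_one]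
    rwa [hPsA] at this
  have hPsV : Pstar *ᵥ V = 0 := by
    rw [hV, Matrix.mulVec_mulVec, hPsAinv, Matrix.mulVec_mulVec,
      Matrix.mul_sub, Matrix.mul_one, hPsPs, sub_self, Matrix.zero_mulVec]
  constructor
  · rw [hJ, Matrix.mulVec_mulVec, hPPs]
  · have key : V - P *ᵥ V = r - J := by
      have h1 : (1 - P) *ᵥ V = A *ᵥ V - Pstar *ᵥ V := by
        rw [hA]
        have : (1 - P + Pstar) *ᵥ V = (1 - P) *ᵥ V + Pstar *ᵥ V := by
          rw [Matrix.add_mulVec]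
        rw [this]; abel
      rw [hAV, hPsV, sub_zero] at h1
      rw [Matrix.sub_mulVec, Matrix.one_mulVec] at h1
      rw [h1, Matrix.sub_mulVec, Matrix.one_mulVec, hJ]
    have : r + P *ᵥ V = J + V := by
      have := key
      funext i
      have hk := congrFun key i
      simp only [Pi.sub_apply] at hk
      simp only [Pi.add_apply]
      linarith
    exact this
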